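/- If Σ ⊬ A (in the Hilbert system S over L⊃), then there exists a set of formulas Π ⊇ Σ such that A ∉ Π, Π is a prime Π-theory, and Π is Π-deductively closed. -/
import Mathlib


/-- Formulas of the language L⊃ : propositional variables with ∧, ∨,
    intuitionistic → (`imp`) and classical ⊃ (`sup`). -/
inductive Formula : Type
  | var : ℕ → Formula
  | and : Formula → Formula → Formula
  | or  : Formula → Formula → Formula
  | imp : Formula → Formula → Formula
  | sup : Formula → Formula → Formula

/-- The Hilbert system S : `SDeriv Γ A` means Γ ⊢ A. -/
inductive SDeriv : Set Formula → Formula → Prop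
  | hyp {Γ A} : A ∈ Γ → SDeriv Γ A
  | ax1 {Γ} (A B : Formula) : SDeriv Γ (A.imp (B.imp A))
  | ax2 {Γ} (A B C : Formula) :
      SDeriv Γ ((A.imp (B.imp C)).imp ((A.imp B).imp (A.imp C)))
  | ax3 {Γ} (A B : Formula) : SDeriv Γ ((A.and B).imp A)
  | ax4 {Γ} (A B : Formula) : SDeriv Γ ((A.and B).imp B)
  | ax5 {Γ} (A B C : Formula) :
      SDeriv Γ ((C.imp A).imp ((C.imp B).imp (C.imp (A.and B))))
  | ax6 {Γ} (A B : Formula) : SDeriv Γ (A.imp (A.or B))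
  | ax7 {Γ} (A B : Formula) : SDeriv Γ (B.imp (A.or B))
  | ax8 {Γ} (A B C : Formula) :
      SDeriv Γ ((A.imp C).imp ((B.imp C).imp ((A.or B).imp C)))
  | axM1 {Γ} (A B : Formula) : SDeriv Γ ((A.imp B).sup (A.sup B))
  | axM2 {Γ} (A B C : Formula) :
      SDeriv Γ ((A.sup (B.sup C)).imp ((A.sup B).sup (A.sup C)))
  | axM3 {Γ} (A B C : Formula) :
      SDeriv Γ ((A.sup (B.imp C)).imp (B.imp (A.sup C)))
  | axM4 {Γ} (A B C : Formula) :
      SDeriv Γ ((A.imp (B.sup C)).imp (B.sup (A.imp C)))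
  | axM5 {Γ} (A B C : Formula) :
      SDeriv Γ (((A.sup B).sup C).imp ((A.sup C).imp C))
  | axM6 {Γ} (A B C : Formula) :
      SDeriv Γ ((A.sup C).imp ((B.sup C).imp ((A.or B).sup C)))
  | mp {Γ A B} : SDeriv Γ A → SDeriv Γ (A.sup B) → SDeriv Γ B

/-- `PiTheory P S` : S is a P-theory (clauses (a) and (b)), where ⊢_P is
    derivability in S from the extra assumptions P. -/
def PiTheory (P S : Set Formula) : Prop :=
  (∀ A B : Formula, A ∈ S → B ∈ S → Formula.and A B ∈ S) ∧
  (∀ A B : Formula, SDeriv P (A.imp B) → A ∈ S → B ∈ S)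

/-- S is prime. -/
def IsPrimeSet (S : Set Formula) : Prop :=
  ∀ A B : Formula, Formula.or A B ∈ S → A ∈ S ∨ B ∈ S

/-- Conjunction A ∧ B₁ ∧ ⋯ ∧ Bₙ of a nonempty list. -/
def conjFold : Formula → List Formula → Formula
  | A, [] => A
  | A, B :: L => A.and (conjFold B L)

/-- Disjunction A ∨ B₁ ∨ ⋯ ∨ Bₙ of a nonempty list. -/
def disjFold : Formula → List Formula → Formula
  | A, [] => A
  | A, B :: L => A.or (disjFold B L)

/-- `SeqDeriv P S D` : Σ ⊢_Π Δ, i.e. Σ∪Π ⊢ D₁ ∨ ⋯ ∨ Dₙ for some D₁,…,Dₙ ∈ Δ. -/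
def SeqDeriv (P S D : Set Formula) : Prop :=
  ∃ (D₀ : Formula) (Ds : List Formula), D₀ ∈ D ∧ (∀ X ∈ Ds, X ∈ D) ∧
    SDeriv (S ∪ P) (disjFold D₀ Ds)

/-- `ImpDeriv P S D` : ⊢_Π Σ→Δ, i.e. ⊢_Π (C₁∧⋯∧Cₙ)→(D₁∨⋯∨Dₘ)
    for some C₁,…,Cₙ ∈ Σ and D₁,…,Dₘ ∈ Δ. -/
def ImpDeriv (P S D : Set Formula) : Prop :=
  ∃ (C₀ : Formula) (Cs : List Formula) (D₀ : Formula) (Ds : List Formula),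
    C₀ ∈ S ∧ (∀ X ∈ Cs, X ∈ S) ∧ D₀ ∈ D ∧ (∀ X ∈ Ds, X ∈ D) ∧
    SDeriv P ((conjFold C₀ Cs).imp (disjFold D₀ Ds))

/-- ⟨Σ,Δ⟩ is a Π-partition. -/
def PiPartition (P S D : Set Formula) : Prop :=
  S ∪ D = Set.univ ∧ ¬ ImpDeriv P S D

/-- S is P-deductively closed. -/
def PiDedClosed (P S : Set Formula) : Prop :=
  ∀ A : Formula, SDeriv (S ∪ P) A → A ∈ S

/-! Auxiliary lemmas -/

theorem SDeriv.mono {Γ B} (h : SDeriv Γ B) : ∀ {Γ'}, Γ ⊆ Γ' → SDeriv Γ' B := by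
  induction h with
  | hyp hm => exact fun hs => SDeriv.hyp (hs hm)
  | mp _ _ ih1 ih2 => exact fun hs => SDeriv.mp (ih1 hs) (ih2 hs)
  | ax1 A B => exact fun _ => SDeriv.ax1 A B
  | ax2 A B C => exact fun _ => SDeriv.ax2 A B C
  | ax3 A B => exact fun _ => SDeriv.ax3 A B
  | ax4 A B => exact fun _ => SDeriv.ax4 A B
  | ax5 A B C => exact fun _ => SDeriv.ax5 A B C
  | ax6 A B => exact fun _ => SDeriv.ax6 A B
  | ax7 A B => exact fun _ => SDeriv.ax7 A B
  | ax8 A B C => exact fun _ => SDeriv.ax8 A B C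
  | axM1 A B => exact fun _ => SDeriv.axM1 A B
  | axM2 A B C => exact fun _ => SDeriv.axM2 A B C
  | axM3 A B C => exact fun _ => SDeriv.axM3 A B C
  | axM4 A B C => exact fun _ => SDeriv.axM4 A B C
  | axM5 A B C => exact fun _ => SDeriv.axM5 A B C
  | axM6 A B C => exact fun _ => SDeriv.axM6 A B C

/-- modus ponens for the intuitionistic conditional, via AxM1. -/
theorem SDeriv.mpI {Γ A B} (h1 : SDeriv Γ (A.imp B)) (h2 : SDeriv Γ A) :
    SDeriv Γ B :=
  SDeriv.mp h2 (SDeriv.mp h1 (SDeriv.axM1 A B))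

theorem SDeriv.idI {Γ} (A : Formula) : SDeriv Γ (A.imp A) :=
  SDeriv.mpI (SDeriv.mpI (SDeriv.ax2 A (A.imp A) A) (SDeriv.ax1 A (A.imp A)))
    (SDeriv.ax1 A A)

theorem SDeriv.idS {Γ} (A : Formula) : SDeriv Γ (A.sup A) :=
  SDeriv.mp (SDeriv.idI A) (SDeriv.axM1 A A)

theorem SDeriv.wkI {Γ : Set Formula} {A B : Formula} (h : SDeriv Γ B) : SDeriv Γ (A.imp B) :=
  SDeriv.mpI (SDeriv.ax1 B A) h

theorem SDeriv.wkS {Γ : Set Formula} {A B : Formula} (h : SDeriv Γ B) : SDeriv Γ (A.sup B) :=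
  SDeriv.mp (SDeriv.wkI h) (SDeriv.axM1 A B)

/-- adjunction -/
theorem SDeriv.adj {Γ A B} (h1 : SDeriv Γ A) (h2 : SDeriv Γ B) :
    SDeriv Γ (A.and B) :=
  SDeriv.mpI (SDeriv.mpI (SDeriv.mpI (SDeriv.ax5 A B (Formula.imp A A))
    (SDeriv.wkI h1)) (SDeriv.wkI h2)) (SDeriv.idI A)

/-- deduction theorem for ⊃ -/
theorem SDeriv.ded {Γ C B} (h : SDeriv (Γ ∪ {C}) B) : SDeriv Γ (C.sup B) := by
  induction h with
  | hyp hm =>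
    rcases hm with hm | hm
    · exact SDeriv.wkS (SDeriv.hyp hm)
    · rw [Set.mem_singleton_iff] at hm; subst hm; exact SDeriv.idS _
  | mp _ _ ih1 ih2 =>
    exact SDeriv.mp ih1 (SDeriv.mpI (SDeriv.axM2 _ _ _) ih2)
  | ax1 A B => exact SDeriv.wkS (SDeriv.ax1 A B)
  | ax2 A B C' => exact SDeriv.wkS (SDeriv.ax2 A B C')
  | ax3 A B => exact SDeriv.wkS (SDeriv.ax3 A B)
  | ax4 A B => exact SDeriv.wkS (SDeriv.ax4 A B)
  | ax5 A B C' => exact SDeriv.wkS (SDeriv.ax5 A B C')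
  | ax6 A B => exact SDeriv.wkS (SDeriv.ax6 A B)
  | ax7 A B => exact SDeriv.wkS (SDeriv.ax7 A B)
  | ax8 A B C' => exact SDeriv.wkS (SDeriv.ax8 A B C')
  | axM1 A B => exact SDeriv.wkS (SDeriv.axM1 A B)
  | axM2 A B C' => exact SDeriv.wkS (SDeriv.axM2 A B C')
  | axM3 A B C' => exact SDeriv.wkS (SDeriv.axM3 A B C')
  | axM4 A B C' => exact SDeriv.wkS (SDeriv.axM4 A B C')
  | axM5 A B C' => exact SDeriv.wkS (SDeriv.axM5 A B C')
  | axM6 A B C' => exact SDeriv.wkS (SDeriv.axM6 A B C')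

/-- derivability from a union of a monotone chain is derivability from a stage -/
theorem SDeriv.finitary {c : ℕ → Set Formula} (hc : ∀ n, c n ⊆ c (n + 1))
    {B} (h : SDeriv (⋃ n, c n) B) : ∃ n, SDeriv (c n) B := by
  have hmono : ∀ {m n}, m ≤ n → c m ⊆ c n := by
    intro m n hmn
    induction hmn with
    | refl => exact le_refl _
    | step _ ih => exact ih.trans (hc _)
  induction h with
  | hyp hm =>
    rcases Set.mem_iUnion.1 hm with ⟨n, hn⟩
    exact ⟨n, SDeriv.hyp hn⟩
  | mp _ _ ih1 ih2 =>
    rcases ih1 with ⟨n, h1⟩; rcases ih2 with ⟨m, h2⟩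
    exact ⟨max n m, SDeriv.mp (h1.mono (hmono (le_max_left n m)))
      (h2.mono (hmono (le_max_right n m)))⟩
  | ax1 A B => exact ⟨0, SDeriv.ax1 A B⟩
  | ax2 A B C => exact ⟨0, SDeriv.ax2 A B C⟩
  | ax3 A B => exact ⟨0, SDeriv.ax3 A B⟩
  | ax4 A B => exact ⟨0, SDeriv.ax4 A B⟩
  | ax5 A B C => exact ⟨0, SDeriv.ax5 A B C⟩
  | ax6 A B => exact ⟨0, SDeriv.ax6 A B⟩
  | ax7 A B => exact ⟨0, SDeriv.ax7 A B⟩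
  | ax8 A B C => exact ⟨0, SDeriv.ax8 A B C⟩
  | axM1 A B => exact ⟨0, SDeriv.axM1 A B⟩
  | axM2 A B C => exact ⟨0, SDeriv.axM2 A B C⟩
  | axM3 A B C => exact ⟨0, SDeriv.axM3 A B C⟩
  | axM4 A B C => exact ⟨0, SDeriv.axM4 A B C⟩
  | axM5 A B C => exact ⟨0, SDeriv.axM5 A B C⟩
  | axM6 A B C => exact ⟨0, SDeriv.axM6 A B C⟩

/-- an injective encoding of formulas into ℕ -/
def Formula.enc : Formula → ℕ
  | Formula.var n => Nat.pair 0 n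
  | Formula.and a b => Nat.pair 1 (Nat.pair a.enc b.enc)
  | Formula.or a b => Nat.pair 2 (Nat.pair a.enc b.enc)
  | Formula.imp a b => Nat.pair 3 (Nat.pair a.enc b.enc)
  | Formula.sup a b => Nat.pair 4 (Nat.pair a.enc b.enc)

theorem Formula.enc_inj : Function.Injective Formula.enc := by
  intro x
  induction x with
  | var n => intro y hy; cases y <;> simp [Formula.enc, Nat.pair_eq_pair] at hy ⊢ <;> try omega
  | and a b iha ihb =>
    intro y hy; cases y <;> simp [Formula.enc, Nat.pair_eq_pair] at hy ⊢
    exact ⟨iha hy.1, ihb hy.2⟩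
  | or a b iha ihb =>
    intro y hy; cases y <;> simp [Formula.enc, Nat.pair_eq_pair] at hy ⊢
    exact ⟨iha hy.1, ihb hy.2⟩
  | imp a b iha ihb =>
    intro y hy; cases y <;> simp [Formula.enc, Nat.pair_eq_pair] at hy ⊢
    exact ⟨iha hy.1, ihb hy.2⟩
  | sup a b iha ihb =>
    intro y hy; cases y <;> simp [Formula.enc, Nat.pair_eq_pair] at hy ⊢
    exact ⟨iha hy.1, ihb hy.2⟩

instance : Countable Formula := ⟨Formula.enc, Formula.enc_inj⟩
instance : Nonempty Formula := ⟨Formula.var 0⟩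

open Classical in
/-- the Lindenbaum construction -/
noncomputable def lindStep (S : Set Formula) (A : Formula) (f : ℕ → Formula) :
    ℕ → Set Formula
  | 0 => S
  | n + 1 =>
    if SDeriv (lindStep S A f n ∪ {f n}) A then lindStep S A f n
    else lindStep S A f n ∪ {f n}

/-- If Σ ⊬ A then there is Π ⊇ Σ such that A ∉ Π, Π is a prime Π-theory and
Π is Π-deductively closed. -/
theorem extend_to_prime_selfclosed (S : Set Formula) (A : Formula)
    (h : ¬ SDeriv S A) :
    ∃ P : Set Formula, S ⊆ P ∧ A ∉ P ∧ PiTheory P P ∧ IsPrimeSet P ∧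
      PiDedClosed P P := by
  classical
  obtain ⟨f, hf⟩ := exists_surjective_nat Formula
  set c := lindStep S A f with hc
  have hunf : ∀ n, c (n + 1) =
      if SDeriv (c n ∪ {f n}) A then c n else c n ∪ {f n} := fun n => rfl
  have hstep : ∀ n, c n ⊆ c (n + 1) := by
    intro n B hB
    by_cases hd : SDeriv (c n ∪ {f n}) A
    · rw [hunf, if_pos hd]; exact hB
    · rw [hunf, if_neg hd]; exact Or.inl hB
  set P := ⋃ n, c n with hP
  have hSP : S ⊆ P := Set.subset_iUnion_of_subset 0 (by simp [hc, lindStep])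
  have hnot : ¬ SDeriv P A := by
    intro hPA
    obtain ⟨n, hn⟩ := SDeriv.finitary hstep hPA
    have : ∀ m, ¬ SDeriv (c m) A := by
      intro m
      induction m with
      | zero => exact h
      | succ k ih =>
        by_cases hd : SDeriv (c k ∪ {f k}) A
        · rw [hunf, if_pos hd]; exact ih
        · rw [hunf, if_neg hd]; exact hd
    exact this n hn
  have hmax : ∀ B : Formula, B ∉ P → SDeriv (P ∪ {B}) A := by
    intro B hB
    obtain ⟨n, rfl⟩ := hf B
    have hBn1 : f n ∉ c (n + 1) := fun hmem =>
      hB (Set.mem_iUnion.2 ⟨n + 1, hmem⟩)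
    by_cases hd : SDeriv (c n ∪ {f n}) A
    · exact hd.mono (Set.union_subset_union_left _
        (Set.subset_iUnion_of_subset n (le_refl _)))
    · refine absurd ?_ hBn1
      rw [hunf, if_neg hd]
      exact Or.inr rfl
  have hclosed : ∀ B : Formula, SDeriv P B → B ∈ P := by
    intro B hPB
    by_contra hB
    exact hnot (SDeriv.mp hPB (SDeriv.ded (hmax B hB)))
  refine ⟨P, hSP, fun hA => hnot (SDeriv.hyp hA), ⟨?_, ?_⟩, ?_, ?_⟩
  · intro B C hB hC
    exact hclosed _ (SDeriv.adj (SDeriv.hyp hB) (SDeriv.hyp hC))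
  · intro B C hBC hB
    exact hclosed _ (SDeriv.mpI hBC (SDeriv.hyp hB))
  · intro B C hor
    by_contra hcon
    push_neg at hcon
    have h1 : SDeriv P (B.sup A) := SDeriv.ded (hmax B hcon.1)
    have h2 : SDeriv P (C.sup A) := SDeriv.ded (hmax C hcon.2)
    have h3 : SDeriv P ((B.or C).sup A) :=
      SDeriv.mpI (SDeriv.mpI (SDeriv.axM6 B C A) h1) h2
    exact hnot (SDeriv.mp (SDeriv.hyp hor) h3)
  · intro B hB
    rw [Set.union_self] at hB
    exact hclosed B hB
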